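/- Disjoint combination, disjunction part: let V be a finite type, V₁ and V₂ disjoint finsets of V, and for i = 1, 2 let f_i be a monotone predicate on subsets of V_i (S ⊆ S' implies f_i S → f_i S') with f_i V_i true, and let h_i ∈ FreeGroup V be supported in V_i and satisfy kill_S h_i = 1 ↔ f_i (S ∩ V_i) for every S : Finset V. Then the commutator ⁅h₁, h₂⁆ satisfies kill_S ⁅h₁, h₂⁆ = 1 ↔ (f₁ (S ∩ V₁) ∨ f₂ (S ∩ V₂)) for every S : Finset V. -/

import Mathlib

/-- The removal homomorphism: kills the generators with index in `S`. -/
def kill {V : Type*} [DecidableEq V] (S : Finset V) : FreeGroup V →* FreeGroup V :=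
  FreeGroup.lift fun i => if i ∈ S then 1 else FreeGroup.of i

/-- `h` is supported in the finset `L`: it lies in the subgroup generated by the
generators indexed by `L`. -/
def SupportedIn {V : Type*} (h : FreeGroup V) (L : Finset V) : Prop :=
  h ∈ Subgroup.closure (FreeGroup.of '' (L : Set V))

open scoped commutatorElement

namespace DisjAux

open FreeGroup

variable {V : Type*} [DecidableEq V]

lemma tail_reduced {x : V × Bool} {L : List (V × Bool)}
    (h : reduce (x :: L) = x :: L) : reduce L = L := by
  rcases hL : reduce L with _ | ⟨hd, tl⟩
  · rw [reduce.cons, hL] at h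
    simp only [] at h
    have : L = [] := (List.cons.injEq .. ▸ h).2.symm
    simpa [this] using hL
  · rw [reduce.cons, hL] at h
    by_cases hc : x.1 = hd.1 ∧ x.2 = !hd.2
    · exfalso
      simp only [hc, and_self, if_true] at h
      have hsub : List.Sublist (reduce L) L := (reduce.red (L := L)).sublist
      have hlen : (hd :: tl).length ≤ L.length := hL ▸ hsub.length_le
      have hlen' : tl.length + 1 ≤ L.length := hlen
      rw [h] at hlen'
      simp at hlen'
    · simp only [hc, if_false] at h
      exact (List.cons.injEq .. ▸ h).2

lemma reduce_append {L₁ L₂ : List (V × Bool)}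
    (h₁ : reduce L₁ = L₁) (h₂ : reduce L₂ = L₂)
    (hj : ∀ x ∈ L₁.getLast?, ∀ y ∈ L₂.head?, x.1 ≠ y.1) :
    reduce (L₁ ++ L₂) = L₁ ++ L₂ := by
  induction L₁ with
  | nil => simpa using h₂
  | cons x L₁ ih =>
    have hL₁ : reduce L₁ = L₁ := tail_reduced h₁
    cases L₁ with
    | nil =>
      simp only [List.nil_append, List.singleton_append]
      rcases hL2 : L₂ with _ | ⟨y, tl⟩
      · simp [reduce]
      · have hxy : x.1 ≠ y.1 := by
          apply hj x (by simp) y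
          simp [hL2]
        rw [reduce.cons, ← hL2, h₂, hL2]
        simp [hxy]
    | cons z rest =>
      have hrec : reduce ((z :: rest) ++ L₂) = (z :: rest) ++ L₂ := by
        apply ih hL₁
        intro a ha b hb
        exact hj a (by rw [List.getLast?_cons_cons]; exact ha) b hb
      have hxz : ¬(x.1 = z.1 ∧ x.2 = !z.2) := by
        intro hc
        have hthis := h₁
        rw [reduce.cons, hL₁] at hthis
        simp only [hc, and_self, if_true] at hthis
        have hl := congrArg List.length hthis
        simp at hl
        omega
      rw [List.cons_append, reduce.cons, hrec]
      simp [hxz]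

lemma letters_mem {A : Finset V} {a : FreeGroup V}
    (ha : SupportedIn a A) :
    ∀ p ∈ a.toWord, p.1 ∈ A := by
  unfold SupportedIn at ha
  induction ha using Subgroup.closure_induction with
  | mem x hx =>
    obtain ⟨i, hi, rfl⟩ := hx
    intro p hp
    rw [toWord_of] at hp
    simp only [List.mem_singleton] at hp
    subst hp
    simpa using hi
  | one => intro p hp; simp [toWord_one] at hp
  | mul x y hx hy ihx ihy =>
    intro p hp
    have hmem := (toWord_mul_sublist x y).mem hp
    rw [List.mem_append] at hmem
    rcases hmem with h | h
    · exact ihx p h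
    · exact ihy p h
  | inv x hx ihx =>
    intro p hp
    rw [toWord_inv, invRev] at hp
    simp only [List.mem_reverse, List.mem_map] at hp
    obtain ⟨q, hq, rfl⟩ := hp
    exact ihx q hq

lemma commutator_ne_one {A B : Finset V} (hAB : Disjoint A B) {a b : FreeGroup V}
    (hA : ∀ p ∈ a.toWord, p.1 ∈ A) (hB : ∀ p ∈ b.toWord, p.1 ∈ B)
    (ha : a ≠ 1) (hb : b ≠ 1) : ⁅a, b⁆ ≠ 1 := by
  set La := a.toWord with hLa
  set Lb := b.toWord with hLb
  set La' := a⁻¹.toWord with hLa'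
  set Lb' := b⁻¹.toWord with hLb'
  have hA' : ∀ p ∈ La', p.1 ∈ A := by
    intro p hp
    rw [hLa', toWord_inv, invRev] at hp
    simp only [List.mem_reverse, List.mem_map] at hp
    obtain ⟨q, hq, rfl⟩ := hp
    exact hA q hq
  have hB' : ∀ p ∈ Lb', p.1 ∈ B := by
    intro p hp
    rw [hLb', toWord_inv, invRev] at hp
    simp only [List.mem_reverse, List.mem_map] at hp
    obtain ⟨q, hq, rfl⟩ := hp
    exact hB q hq
  have hLane : La ≠ [] := fun h => ha (toWord_eq_nil_iff.mp h)
  have hLbne : Lb ≠ [] := fun h => hb (toWord_eq_nil_iff.mp h)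
  have hLa'ne : La' ≠ [] := fun h => ha (by simpa using toWord_eq_nil_iff.mp h)
  have hLb'ne : Lb' ≠ [] := fun h => hb (by simpa using toWord_eq_nil_iff.mp h)
  have hne : ∀ {x y : V × Bool}, x.1 ∈ A → y.1 ∈ B → x.1 ≠ y.1 := by
    intro x y hx hy h
    exact (Finset.disjoint_left.mp hAB hx) (h ▸ hy)
  have hhead : ∀ {L R : List (V × Bool)}, L ≠ [] → (L ++ R).head? = L.head? := by
    intro L R hL
    cases L with
    | nil => exact absurd rfl hL
    | cons c l => simp
  have hred3 : reduce (La' ++ Lb') = La' ++ Lb' := by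
    apply reduce_append (reduce_toWord _) (reduce_toWord _)
    intro x hx y hy
    exact hne (hA' x (List.mem_of_getLast? hx))
      (hB' y (List.mem_of_mem_head? hy))
  have hred2 : reduce (Lb ++ (La' ++ Lb')) = Lb ++ (La' ++ Lb') := by
    apply reduce_append (reduce_toWord _) hred3
    intro x hx y hy
    rw [hhead hLa'ne] at hy
    exact (hne (hA' y (List.mem_of_mem_head? (by simp [hy])))
      (hB x (List.mem_of_getLast? hx))).symm
  have hred1 : reduce (La ++ (Lb ++ (La' ++ Lb'))) = La ++ (Lb ++ (La' ++ Lb')) := by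
    apply reduce_append (reduce_toWord _) hred2
    intro x hx y hy
    rw [hhead hLbne] at hy
    exact hne (hA x (List.mem_of_getLast? hx))
      (hB y (List.mem_of_mem_head? (by simp [hy])))
  have hcomm : ⁅a, b⁆ = FreeGroup.mk (La ++ (Lb ++ (La' ++ Lb'))) := by
    rw [← mul_mk, ← mul_mk, ← mul_mk, hLa, hLb, hLa', hLb',
      mk_toWord, mk_toWord, mk_toWord, mk_toWord, commutatorElement_def,
      mul_assoc, mul_assoc]
  intro h
  rw [hcomm] at h
  have h0 : FreeGroup.mk (La ++ (Lb ++ (La' ++ Lb'))) = FreeGroup.mk [] := by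
    simpa [one_eq_mk] using h
  have hsound := reduce.sound h0
  rw [hred1, reduce_nil] at hsound
  exact hLane (List.append_eq_nil_iff.mp hsound).1

lemma kill_supported (S : Finset V) {A : Finset V} {a : FreeGroup V}
    (ha : SupportedIn a A) : SupportedIn (kill S a) A := by
  unfold SupportedIn at *
  induction ha using Subgroup.closure_induction with
  | mem x hx =>
    obtain ⟨i, hi, rfl⟩ := hx
    show kill S (FreeGroup.of i) ∈ _
    rw [kill, FreeGroup.lift_apply_of]
    split
    · exact one_mem _
    · exact Subgroup.subset_closure ⟨i, hi, rfl⟩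
  | one => simpa using one_mem _
  | mul x y hx hy ihx ihy => rw [MonoidHom.map_mul]; exact mul_mem ihx ihy
  | inv x hx ihx => rw [MonoidHom.map_inv]; exact inv_mem ihx

end DisjAux

theorem disjoint_combination_disjunction {V : Type*} [Fintype V] [DecidableEq V]
    (V₁ V₂ : Finset V) (hdisj : Disjoint V₁ V₂)
    (f₁ f₂ : Finset V → Prop)
    (hmono₁ : ∀ S S' : Finset V, S ⊆ S' → f₁ S → f₁ S')
    (hmono₂ : ∀ S S' : Finset V, S ⊆ S' → f₂ S → f₂ S')
    (hfull₁ : f₁ V₁) (hfull₂ : f₂ V₂)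
    (h₁ h₂ : FreeGroup V)
    (hsupp₁ : SupportedIn h₁ V₁) (hsupp₂ : SupportedIn h₂ V₂)
    (hsol₁ : ∀ S : Finset V, kill S h₁ = 1 ↔ f₁ (S ∩ V₁))
    (hsol₂ : ∀ S : Finset V, kill S h₂ = 1 ↔ f₂ (S ∩ V₂)) :
    ∀ S : Finset V, kill S ⁅h₁, h₂⁆ = 1 ↔ (f₁ (S ∩ V₁) ∨ f₂ (S ∩ V₂)) := by
  intro S
  have hmap : kill S ⁅h₁, h₂⁆ = ⁅kill S h₁, kill S h₂⁆ := map_commutatorElement _ _ _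
  constructor
  · intro h
    by_contra hcon
    push_neg at hcon
    obtain ⟨hf1, hf2⟩ := hcon
    have hne1 : kill S h₁ ≠ 1 := fun hh => hf1 ((hsol₁ S).mp hh)
    have hne2 : kill S h₂ ≠ 1 := fun hh => hf2 ((hsol₂ S).mp hh)
    refine DisjAux.commutator_ne_one hdisj
      (DisjAux.letters_mem (DisjAux.kill_supported S hsupp₁))
      (DisjAux.letters_mem (DisjAux.kill_supported S hsupp₂)) hne1 hne2 ?_
    rw [← hmap]; exact h
  · intro h
    rw [hmap]
    rcases h with h | h
    · rw [(hsol₁ S).mpr h]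
      simp
    · rw [(hsol₂ S).mpr h]
      simp
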